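/- Let γ be a circle of radius r centered at the origin in ℂ and let z₁, ..., zₙ ∈ ℂ all satisfy |z_k| > r (all points outside the circle). Then the cyclic iterated integral χ(zₙ,...,z₁) = (1/(2πi)ⁿ) ∫_{cyclically ordered n-tuples on γ} (dwₙ/(zₙ − wₙ)) ⋯ (dw₁/(z₁ − w₁)) equals 0. -/

import Mathlib

open MeasureTheory Real Complex

noncomputable section
-- assume chunk1 pasted above; for testing, re-include it
noncomputable section

/-- character -/
def chr (m : ℕ) (t : ℝ) : ℂ := Complex.exp (Complex.I * m * t)

lemma norm_chr (m : ℕ) (t : ℝ) : ‖chr m t‖ = 1 := by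
  simp [chr, Complex.norm_exp, Complex.mul_re, Complex.mul_im]

lemma chr_continuous (m : ℕ) : Continuous (chr m) := by
  unfold chr
  exact Complex.continuous_exp.comp (continuous_const.mul Complex.continuous_ofReal)

lemma chr_periodic (m : ℕ) (t : ℝ) : chr m (t + 2 * π) = chr m t := by
  unfold chr
  have h1 : (Complex.I * m * ((t : ℂ) + 2 * π)) = Complex.I * m * t + m * (2 * π * Complex.I) := by
    ring
  rw [Complex.ofReal_add]
  push_cast
  rw [h1, Complex.exp_add, Complex.exp_nat_mul_two_pi_mul_I, mul_one]

lemma chr_hasDerivAt (m : ℕ) (t : ℝ) :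
    HasDerivAt (chr m) (Complex.I * m * chr m t) t := by
  have h : HasDerivAt (fun u : ℂ => Complex.exp (Complex.I * m * u))
      (Complex.exp (Complex.I * m * t) * (Complex.I * m * 1)) (t : ℂ) :=
    ((hasDerivAt_id (t : ℂ)).const_mul (Complex.I * m)).cexp
  have h2 := h.comp_ofReal
  unfold chr
  convert h2 using 1
  ring

def HasRep (g : ℝ → ℂ) (a : ℕ → ℂ) : Prop :=
  (∃ C ρ : ℝ, 0 ≤ ρ ∧ ρ < 1 ∧ ∀ m, ‖a m‖ ≤ C * ρ ^ m) ∧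
  ∀ t : ℝ, g t = ∑' m : ℕ, a m * chr m t

def IsPos (g : ℝ → ℂ) : Prop := ∃ a, HasRep g a

def IsPos0 (g : ℝ → ℂ) : Prop := ∃ a, HasRep g a ∧ a 0 = 0

lemma IsPos0.isPos {g : ℝ → ℂ} (h : IsPos0 g) : IsPos g := h.imp fun _ h => h.1

lemma bound_summable {C ρ : ℝ} (hρ0 : 0 ≤ ρ) (hρ : ρ < 1) :
    Summable (fun m : ℕ => C * ρ ^ m) :=
  (summable_geometric_of_lt_one hρ0 hρ).mul_left C

lemma rep_term_summable {a : ℕ → ℂ} {C ρ : ℝ} (hρ0 : 0 ≤ ρ) (hρ : ρ < 1)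
    (hC : ∀ m, ‖a m‖ ≤ C * ρ ^ m) (t : ℝ) :
    Summable (fun m => a m * chr m t) := by
  apply Summable.of_norm_bounded (bound_summable hρ0 hρ)
  intro m
  rw [norm_mul, norm_chr, mul_one]
  exact hC m

lemma rep_norm_summable {a : ℕ → ℂ} {C ρ : ℝ} (hρ0 : 0 ≤ ρ) (hρ : ρ < 1)
    (hC : ∀ m, ‖a m‖ ≤ C * ρ ^ m) (t : ℝ) :
    Summable (fun m => ‖a m * chr m t‖) := by
  refine Summable.of_nonneg_of_le (fun m => norm_nonneg _) (fun m => ?_) (bound_summable (C:=C) hρ0 hρ)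
  rw [norm_mul, norm_chr, mul_one]
  exact hC m

lemma HasRep.continuous {g : ℝ → ℂ} {a : ℕ → ℂ} (h : HasRep g a) : Continuous g := by
  obtain ⟨⟨C, ρ, hρ0, hρ, hC⟩, hg⟩ := h
  have : Continuous (fun t : ℝ => ∑' m : ℕ, a m * chr m t) := by
    apply continuous_tsum (fun m => continuous_const.mul (chr_continuous m)) (bound_summable hρ0 hρ)
    intro m t
    show ‖a m * chr m t‖ ≤ _
    rw [norm_mul, norm_chr, mul_one]
    exact hC m
  exact this.congr fun t => (hg t).symm

lemma HasRep.periodic {g : ℝ → ℂ} {a : ℕ → ℂ} (h : HasRep g a) (t : ℝ) :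
    g (t + 2 * π) = g t := by
  rw [h.2, h.2]
  exact tsum_congr fun m => by rw [chr_periodic]

end

noncomputable section

lemma geom_aux {ρ ρ' : ℝ} (hρ0 : 0 ≤ ρ) (hρρ' : ρ < ρ') (hρ' : ρ' < 1) (hρ'0 : 0 < ρ') :
    ∃ K : ℝ, 0 ≤ K ∧ ∀ n : ℕ, (n + 1 : ℝ) * ρ ^ n ≤ K * ρ' ^ n := by
  set x : ℝ := ρ / ρ' with hx
  have hx0 : 0 ≤ x := div_nonneg hρ0 hρ'0.le
  have hx1 : x < 1 := (div_lt_one hρ'0).2 hρρ'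
  have hsum : Summable (fun n : ℕ => (n + 1 : ℝ) * x ^ n) := by
    have h1 : Summable (fun n : ℕ => (n : ℝ) ^ 1 * x ^ n) :=
      summable_pow_mul_geometric_of_norm_lt_one 1 (by rwa [Real.norm_eq_abs, _root_.abs_of_nonneg hx0])
    have h2 : Summable (fun n : ℕ => x ^ n) := summable_geometric_of_lt_one hx0 hx1
    simpa [add_mul, one_mul, pow_one] using h1.add h2
  refine ⟨∑' (k : ℕ), (k + 1 : ℝ) * x ^ k, tsum_nonneg (fun k => by positivity), fun n => ?_⟩
  have hle : (n + 1 : ℝ) * x ^ n ≤ ∑' (k : ℕ), (k + 1 : ℝ) * x ^ k :=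
    Summable.le_tsum hsum n (fun m _ => by positivity)
  calc (n + 1 : ℝ) * ρ ^ n = ((n + 1 : ℝ) * x ^ n) * ρ' ^ n := by
        rw [hx, div_pow, mul_assoc, div_mul_cancel₀]
        exact (pow_pos hρ'0 n).ne'
    _ ≤ (∑' (k : ℕ), (k + 1 : ℝ) * x ^ k) * ρ' ^ n := by
        exact mul_le_mul_of_nonneg_right hle (pow_pos hρ'0 n).le

lemma HasRep.mul {f g : ℝ → ℂ} {a b : ℕ → ℂ} (hf : HasRep f a) (hg : HasRep g b) :
    HasRep (fun t => f t * g t) (fun n => ∑ kl ∈ Finset.HasAntidiagonal.antidiagonal n, a kl.1 * b kl.2) := by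
  obtain ⟨⟨C₁, ρ₁, hρ₁0, hρ₁, hC₁⟩, hfs⟩ := hf
  obtain ⟨⟨C₂, ρ₂, hρ₂0, hρ₂, hC₂⟩, hgs⟩ := hg
  have hC₁0 : 0 ≤ C₁ := le_trans (norm_nonneg (a 0)) (by simpa using hC₁ 0)
  have hC₂0 : 0 ≤ C₂ := le_trans (norm_nonneg (b 0)) (by simpa using hC₂ 0)
  set ρ : ℝ := max ρ₁ ρ₂ with hρdef
  have hρ0 : 0 ≤ ρ := le_trans hρ₁0 (le_max_left _ _)
  have hρ1 : ρ < 1 := max_lt hρ₁ hρ₂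
  set ρ' : ℝ := (1 + ρ) / 2 with hρ'def
  have hρρ' : ρ < ρ' := by rw [hρ'def]; linarith
  have hρ'1 : ρ' < 1 := by rw [hρ'def]; linarith
  have hρ'0 : 0 < ρ' := by rw [hρ'def]; linarith
  obtain ⟨K, hK0, hK⟩ := geom_aux hρ0 hρρ' hρ'1 hρ'0
  constructor
  · refine ⟨C₁ * C₂ * K, ρ', hρ'0.le, hρ'1, fun n => ?_⟩
    calc ‖∑ kl ∈ Finset.HasAntidiagonal.antidiagonal n, a kl.1 * b kl.2‖
        ≤ ∑ kl ∈ Finset.HasAntidiagonal.antidiagonal n, ‖a kl.1 * b kl.2‖ := norm_sum_le _ _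
      _ ≤ ∑ kl ∈ Finset.HasAntidiagonal.antidiagonal n, C₁ * C₂ * ρ ^ n := by
          refine Finset.sum_le_sum fun kl hkl => ?_
          have hkln : kl.1 + kl.2 = n := Finset.HasAntidiagonal.mem_antidiagonal.1 hkl
          rw [norm_mul]
          calc ‖a kl.1‖ * ‖b kl.2‖ ≤ (C₁ * ρ₁ ^ kl.1) * (C₂ * ρ₂ ^ kl.2) :=
                mul_le_mul (hC₁ _) (hC₂ _) (norm_nonneg _)
                  (by positivity)
            _ ≤ (C₁ * ρ ^ kl.1) * (C₂ * ρ ^ kl.2) := by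
                have h1 : ρ₁ ^ kl.1 ≤ ρ ^ kl.1 := pow_le_pow_left₀ hρ₁0 (le_max_left _ _) _
                have h2 : ρ₂ ^ kl.2 ≤ ρ ^ kl.2 := pow_le_pow_left₀ hρ₂0 (le_max_right _ _) _
                gcongr
            _ = C₁ * C₂ * ρ ^ n := by rw [← hkln, pow_add]; ring
      _ = (n + 1 : ℝ) * (C₁ * C₂ * ρ ^ n) := by
          rw [Finset.sum_const, Finset.Nat.card_antidiagonal, nsmul_eq_mul]
          push_cast; ring
      _ ≤ C₁ * C₂ * K * ρ' ^ n := by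
          have := hK n
          calc (n + 1 : ℝ) * (C₁ * C₂ * ρ ^ n) = (C₁ * C₂) * ((n + 1 : ℝ) * ρ ^ n) := by ring
            _ ≤ (C₁ * C₂) * (K * ρ' ^ n) :=
                mul_le_mul_of_nonneg_left (hK n) (by positivity)
            _ = C₁ * C₂ * K * ρ' ^ n := by ring
  · intro t
    simp only []
    rw [hfs t, hgs t,
      tsum_mul_tsum_eq_tsum_sum_antidiagonal_of_summable_norm
        (rep_norm_summable hρ₁0 hρ₁ hC₁ t) (rep_norm_summable hρ₂0 hρ₂ hC₂ t)]
    refine tsum_congr fun n => ?_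
    rw [Finset.sum_mul]
    refine Finset.sum_congr rfl fun kl hkl => ?_
    have hkln : kl.1 + kl.2 = n := Finset.HasAntidiagonal.mem_antidiagonal.1 hkl
    have : chr kl.1 t * chr kl.2 t = chr n t := by
      rw [chr, chr, chr, ← Complex.exp_add, ← hkln]
      push_cast; ring_nf
    calc a kl.1 * chr kl.1 t * (b kl.2 * chr kl.2 t)
        = a kl.1 * b kl.2 * (chr kl.1 t * chr kl.2 t) := by ring
      _ = a kl.1 * b kl.2 * chr n t := by rw [this]

end

noncomputable section

lemma hasRep_const (c : ℂ) : HasRep (fun _ => c) (fun m => if m = 0 then c else 0) := by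
  constructor
  · refine ⟨‖c‖, 1/2, by norm_num, by norm_num, fun m => ?_⟩
    rcases m with _ | m
    · simp
    · simp only [Nat.succ_ne_zero, if_false, norm_zero]
      positivity
  · intro t
    rw [tsum_eq_single 0 (fun m hm => by simp [hm])]
    simp [chr]

lemma IsPos.const (c : ℂ) : IsPos (fun _ => c) := ⟨_, hasRep_const c⟩

lemma IsPos.mul {f g : ℝ → ℂ} (hf : IsPos f) (hg : IsPos g) : IsPos (fun t => f t * g t) := by
  obtain ⟨a, ha⟩ := hf; obtain ⟨b, hb⟩ := hg
  exact ⟨_, ha.mul hb⟩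

lemma IsPos0.mul_isPos {f g : ℝ → ℂ} (hf : IsPos0 f) (hg : IsPos g) :
    IsPos0 (fun t => f t * g t) := by
  obtain ⟨a, ha, ha0⟩ := hf; obtain ⟨b, hb⟩ := hg
  refine ⟨_, ha.mul hb, ?_⟩
  simp [ha0]

lemma IsPos.continuous {f : ℝ → ℂ} (hf : IsPos f) : Continuous f := by
  obtain ⟨a, ha⟩ := hf; exact ha.continuous

lemma IsPos.periodic {f : ℝ → ℂ} (hf : IsPos f) (t : ℝ) : f (t + 2 * π) = f t := by
  obtain ⟨a, ha⟩ := hf; exact ha.periodic t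

lemma IsPos0.exists_primitive {g : ℝ → ℂ} (hg : IsPos0 g) :
    ∃ P : ℝ → ℂ, IsPos P ∧ ∀ t, HasDerivAt P (g t) t := by
  obtain ⟨a, ⟨⟨C, ρ, hρ0, hρ, hC⟩, hgs⟩, ha0⟩ := hg
  set b : ℕ → ℂ := fun m => a m / (Complex.I * m) with hbdef
  have hb_mul : ∀ m : ℕ, b m * (Complex.I * m) = a m := by
    intro m
    rcases Nat.eq_zero_or_pos m with rfl | hm
    · simp [hbdef, ha0]
    · rw [hbdef]
      apply div_mul_cancel₀
      simp only [ne_eq, mul_eq_zero, Complex.I_ne_zero, Nat.cast_eq_zero, false_or]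
      omega
  have hbnorm : ∀ m, ‖b m‖ ≤ ‖a m‖ := by
    intro m
    rcases Nat.eq_zero_or_pos m with rfl | hm
    · simp [hbdef, ha0]
    · rw [hbdef, norm_div]
      apply div_le_self (norm_nonneg _)
      rw [norm_mul, Complex.norm_I, one_mul, Complex.norm_natCast]
      exact_mod_cast hm
  have hbC : ∀ m, ‖b m‖ ≤ C * ρ ^ m := fun m => (hbnorm m).trans (hC m)
  refine ⟨fun t => ∑' m, b m * chr m t, ⟨b, ⟨⟨C, ρ, hρ0, hρ, hbC⟩, fun t => rfl⟩⟩, fun t => ?_⟩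
  have hderiv : ∀ (m : ℕ) (y : ℝ), HasDerivAt (fun t => b m * chr m t) (a m * chr m y) y := by
    intro m y
    have := (chr_hasDerivAt m y).const_mul (b m)
    rw [show a m * chr m y = b m * (Complex.I * m * chr m y) by rw [← hb_mul m]; ring]
    exact this
  have key := hasDerivAt_tsum (g := fun m (t : ℝ) => b m * chr m t)
    (g' := fun m (t : ℝ) => a m * chr m t) (u := fun m => C * ρ ^ m)
    (bound_summable hρ0 hρ) hderiv
    (fun m y => by rw [norm_mul, norm_chr, mul_one]; exact hC m)
    (rep_term_summable hρ0 hρ hbC 0) t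
  rw [hgs t]
  exact key
end

noncomputable section

lemma IsPos0.integral_zero {g : ℝ → ℂ} (hg : IsPos0 g) :
    ∫ t in (0:ℝ)..(2 * π), g t = 0 := by
  obtain ⟨P, hP, hPd⟩ := hg.exists_primitive
  have hcont : Continuous g := hg.isPos.continuous
  have h := intervalIntegral.integral_eq_sub_of_hasDerivAt
    (f := P) (f' := g) (a := (0:ℝ)) (b := 2 * π)
    (fun t _ => hPd t) (hcont.intervalIntegrable _ _)
  rw [h]
  have := hP.periodic 0
  rw [zero_add] at this
  rw [this, sub_self]

lemma isPos0_basic {z : ℂ} {r : ℝ} (hr : 0 < r) (hz : r < ‖z‖) :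
    IsPos0 (fun t : ℝ => (Complex.I * r * Complex.exp (Complex.I * (t : ℂ))) /
      (z - r * Complex.exp (Complex.I * (t : ℂ)))) := by
  have hz0 : z ≠ 0 := by
    intro h; rw [h] at hz; simp at hz; linarith
  set c : ℂ := (r : ℂ) / z with hcdef
  have hcnorm : ‖c‖ = r / ‖z‖ := by
    rw [hcdef, norm_div, Complex.norm_real, Real.norm_eq_abs, _root_.abs_of_nonneg hr.le]
  have hc1 : ‖c‖ < 1 := by
    rw [hcnorm, div_lt_one (lt_trans hr hz)]
    exact hz
  have hc0 : 0 ≤ ‖c‖ := norm_nonneg _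
  refine ⟨fun m => if m = 0 then 0 else Complex.I * c ^ m, ⟨⟨1, ‖c‖, hc0, hc1, fun m => ?_⟩, fun t => ?_⟩, rfl⟩
  · rcases m with _ | m
    · simp
    · simp only [Nat.succ_ne_zero, if_false, norm_mul, Complex.norm_I, one_mul, norm_pow, one_mul]
      exact le_rfl
  · -- the tsum identity
    have hw : ∀ m : ℕ, c ^ m * chr m t = (c * Complex.exp (Complex.I * t)) ^ m := by
      intro m
      rw [mul_pow, chr, ← Complex.exp_nat_mul]
      ring_nf
    set w : ℂ := c * Complex.exp (Complex.I * t) with hwdef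
    have hwnorm : ‖w‖ < 1 := by
      rw [hwdef, norm_mul]
      have : ‖Complex.exp (Complex.I * t)‖ = 1 := by
        simpa [chr] using norm_chr 1 t
      rw [this, mul_one]; exact hc1
    have hsumw : Summable (fun m : ℕ => Complex.I * w ^ m) :=
      (summable_geometric_of_norm_lt_one hwnorm).mul_left _
    have hsum : Summable (fun m : ℕ => (if m = 0 then 0 else Complex.I * c ^ m) * chr m t) := by
      apply rep_term_summable (C := 1) hc0 hc1
      intro m
      rcases m with _ | m
      · simp
      · simp only [Nat.succ_ne_zero, if_false, norm_mul, Complex.norm_I, one_mul, norm_pow, one_mul]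
        exact le_rfl
    rw [Summable.tsum_eq_zero_add hsum]
    simp only [if_pos rfl, ↓reduceIte, zero_mul, zero_add]
    have hterm : ∀ m : ℕ, (if m + 1 = 0 then 0 else Complex.I * c ^ (m+1)) * chr (m+1) t
        = Complex.I * w * w ^ m := by
      intro m
      rw [if_neg (Nat.succ_ne_zero m)]
      rw [mul_assoc, hw (m+1)]
      rw [pow_succ]
      ring
    rw [tsum_congr hterm]
    have : ∑' m : ℕ, Complex.I * w * w ^ m = Complex.I * w * (1 - w)⁻¹ := by
      rw [tsum_mul_left, tsum_geometric_of_norm_lt_one hwnorm]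
    rw [this]
    -- now algebra
    have hne : z - r * Complex.exp (Complex.I * t) ≠ 0 := by
      intro h
      have : ‖(r : ℂ) * Complex.exp (Complex.I * t)‖ = ‖z‖ := by
        rw [(sub_eq_zero.mp h).symm]
      rw [norm_mul, Complex.norm_exp] at this
      simp only [Complex.norm_real, Real.norm_eq_abs, _root_.abs_of_nonneg hr.le] at this
      have hre : (Complex.I * (t:ℂ)).re = 0 := by simp
      rw [hre, Real.exp_zero, mul_one] at this
      rw [← this] at hz
      exact lt_irrefl _ hz
    have h1w : (1 : ℂ) - w ≠ 0 := by
      intro h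
      have : w = 1 := by linear_combination -h
      rw [this] at hwnorm; simp at hwnorm
    field_simp [hwdef, hcdef]
    rw [hwdef, hcdef, div_mul_eq_mul_div]
    linear_combination -((r : ℂ) * Complex.exp (Complex.I * t)) * mul_inv_cancel₀ hz0
end

noncomputable section

def iterF : (n : ℕ) → (Fin n → ℝ → ℂ) → ℝ → ℝ → ℂ
  | 0, _, _, _ => 1
  | n+1, g, x, y => ∫ t in x..y, g 0 t * iterF n (fun i => g i.succ) t y

lemma iterF_structure : ∀ (n : ℕ) (g : Fin n → ℝ → ℂ), (∀ i, IsPos0 (g i)) →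
    ∃ (k : ℕ) (p q : ℕ → ℝ → ℂ), (∀ i, IsPos (p i)) ∧ (∀ i, IsPos (q i)) ∧
      ∀ x y : ℝ, iterF n g x y = ∑ i ∈ Finset.range k, p i x * q i y := by
  intro n
  induction n with
  | zero =>
    intro g _
    refine ⟨1, fun _ _ => 1, fun _ _ => 1, fun _ => IsPos.const 1, fun _ => IsPos.const 1, ?_⟩
    intro x y
    simp [iterF]
  | succ n ih =>
    intro g hg
    obtain ⟨k, p, q, hp, hq, hiter⟩ := ih (fun i => g i.succ) (fun i => hg i.succ)
    -- primitives of g 0 * p i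
    have hgp : ∀ i, IsPos0 (fun t => g 0 t * p i t) := fun i => (hg 0).mul_isPos (hp i)
    choose P hPpos hPderiv using fun i => (hgp i).exists_primitive
    refine ⟨k + k,
      fun i => if i < k then (fun _ => 1) else (fun x => (-1) * P (i - k) x),
      fun i => if i < k then (fun y => P i y * q i y) else q (i - k),
      ?_, ?_, ?_⟩
    · intro i
      by_cases h : i < k <;> simp only [h, if_true, if_false]
      · exact IsPos.const 1
      · exact (IsPos.const (-1)).mul (hPpos _)
    · intro i
      by_cases h : i < k <;> simp only [h, if_true, if_false]
      · exact (hPpos i).mul (hq i)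
      · exact hq _
    · intro x y
      have key : iterF (n+1) g x y = ∫ t in x..y, ∑ i ∈ Finset.range k, (g 0 t * p i t) * q i y := by
        show (∫ t in x..y, g 0 t * iterF n (fun i => g i.succ) t y) = _
        refine intervalIntegral.integral_congr fun t _ => ?_
        rw [hiter t y, Finset.mul_sum]
        exact Finset.sum_congr rfl fun i _ => by ring
      have hderiv : ∀ t : ℝ, HasDerivAt (fun t => ∑ i ∈ Finset.range k, P i t * q i y)
          (∑ i ∈ Finset.range k, (g 0 t * p i t) * q i y) t := by
        intro t
        exact HasDerivAt.fun_sum fun i _ => (hPderiv i t).mul_const (q i y)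
      have hcont : Continuous (fun t => ∑ i ∈ Finset.range k, (g 0 t * p i t) * q i y) := by
        apply continuous_finset_sum
        intro i _
        exact ((hgp i).isPos.continuous).mul continuous_const
      rw [key, intervalIntegral.integral_eq_sub_of_hasDerivAt (fun t _ => hderiv t)
        (hcont.intervalIntegrable _ _)]
      rw [Finset.sum_range_add]
      have h1 : ∑ i ∈ Finset.range k,
          (if i < k then (fun _ : ℝ => (1:ℂ)) else (fun x => (-1) * P (i - k) x)) x *
          (if i < k then (fun y => P i y * q i y) else q (i - k)) y
          = ∑ i ∈ Finset.range k, P i y * q i y := by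
        refine Finset.sum_congr rfl fun i hi => ?_
        rw [if_pos (Finset.mem_range.1 hi), if_pos (Finset.mem_range.1 hi)]
        simp
      have h2 : ∑ i ∈ Finset.range k,
          (if k + i < k then (fun _ : ℝ => (1:ℂ)) else (fun x => (-1) * P (k + i - k) x)) x *
          (if k + i < k then (fun y => P (k + i) y * q (k + i) y) else q (k + i - k)) y
          = -∑ i ∈ Finset.range k, P i x * q i y := by
        rw [← Finset.sum_neg_distrib]
        refine Finset.sum_congr rfl fun i hi => ?_
        rw [if_neg (by omega), if_neg (by omega)]
        simp only [Nat.add_sub_cancel_left]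
        ring
      rw [h1, h2]
      ring

lemma cyclic_zero (n : ℕ) (g : Fin (n+1) → ℝ → ℂ) (hg : ∀ i, IsPos0 (g i)) :
    ∫ t in (0:ℝ)..(2 * π), g 0 t * iterF n (fun i => g i.succ) t (t + 2 * π) = 0 := by
  obtain ⟨k, p, q, hp, hq, hiter⟩ := iterF_structure n (fun i => g i.succ) (fun i => hg i.succ)
  have hcongr : ∀ t : ℝ, g 0 t * iterF n (fun i => g i.succ) t (t + 2 * π)
      = ∑ i ∈ Finset.range k, (fun s => g 0 s * (p i s * q i s)) t := by
    intro t
    rw [hiter t (t + 2*π), Finset.mul_sum]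
    refine Finset.sum_congr rfl fun i _ => ?_
    rw [(hq i).periodic t]
  rw [intervalIntegral.integral_congr (fun t _ => hcongr t)]
  rw [intervalIntegral.integral_finset_sum]
  · refine Finset.sum_eq_zero fun i _ => ?_
    exact IsPos0.integral_zero ((hg 0).mul_isPos ((hp i).mul (hq i)))
  · intro i _
    exact (((hg 0).mul_isPos ((hp i).mul (hq i))).isPos.continuous).intervalIntegrable _ _
end

noncomputable section

def ordSet (n : ℕ) (x y : ℝ) : Set (Fin n → ℝ) :=
  {θ | (∀ i j : Fin n, i ≤ j → θ i ≤ θ j) ∧ (∀ i, x ≤ θ i) ∧ (∀ i, θ i ≤ y)}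

lemma isClosed_ordSet (n : ℕ) (x y : ℝ) : IsClosed (ordSet n x y) := by
  have h1 : IsClosed {θ : Fin n → ℝ | ∀ i j : Fin n, i ≤ j → θ i ≤ θ j} := by
    simp only [Set.setOf_forall]
    exact isClosed_iInter fun i => isClosed_iInter fun j => isClosed_iInter fun _ =>
      isClosed_le (continuous_apply i) (continuous_apply j)
  have h2 : IsClosed {θ : Fin n → ℝ | ∀ i, x ≤ θ i} := by
    simp only [Set.setOf_forall]
    exact isClosed_iInter fun i => isClosed_le continuous_const (continuous_apply i)
  have h3 : IsClosed {θ : Fin n → ℝ | ∀ i, θ i ≤ y} := by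
    simp only [Set.setOf_forall]
    exact isClosed_iInter fun i => isClosed_le (continuous_apply i) continuous_const
  have : ordSet n x y = {θ : Fin n → ℝ | ∀ i j : Fin n, i ≤ j → θ i ≤ θ j} ∩
      ({θ : Fin n → ℝ | ∀ i, x ≤ θ i} ∩ {θ : Fin n → ℝ | ∀ i, θ i ≤ y}) := by
    ext θ; simp [ordSet, Set.mem_setOf_eq, and_assoc]
  rw [this]
  exact h1.inter (h2.inter h3)

lemma isCompact_ordSet (n : ℕ) (x y : ℝ) : IsCompact (ordSet n x y) := by
  refine IsCompact.of_isClosed_subset (isCompact_univ_pi fun _ : Fin n => isCompact_Icc (a := x) (b := y))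
    (isClosed_ordSet n x y) ?_
  intro θ hθ
  exact fun i _ => ⟨hθ.2.1 i, hθ.2.2 i⟩

lemma measurableSet_ordSet (n : ℕ) (x y : ℝ) : MeasurableSet (ordSet n x y) :=
  (isClosed_ordSet n x y).measurableSet

lemma cons_mono_iff {n : ℕ} (t : ℝ) (θ : Fin n → ℝ) :
    (∀ i j : Fin (n+1), i ≤ j → (Fin.cons t θ : Fin (n+1) → ℝ) i ≤ (Fin.cons t θ : Fin (n+1) → ℝ) j) ↔
      ((∀ i j : Fin n, i ≤ j → θ i ≤ θ j) ∧ ∀ i, t ≤ θ i) := by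
  constructor
  · intro h
    refine ⟨fun i j hij => ?_, fun i => ?_⟩
    · have := h i.succ j.succ (by rwa [Fin.succ_le_succ_iff])
      simpa using this
    · have := h 0 i.succ (Fin.zero_le _)
      simpa using this
  · rintro ⟨hmono, ht⟩ i j hij
    induction i using Fin.cases with
    | zero =>
      induction j using Fin.cases with
      | zero => exact le_rfl
      | succ j => simpa using ht j
    | succ i =>
      induction j using Fin.cases with
      | zero =>
        exact absurd hij (by simp [Fin.le_zero_iff, Fin.succ_ne_zero])
      | succ j =>
        have hij' : i ≤ j := by rwa [Fin.succ_le_succ_iff] at hij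
        simpa using hmono i j hij'

lemma cons_mem_ordSet_iff {n : ℕ} (t : ℝ) (θ : Fin n → ℝ) (x y : ℝ) :
    (Fin.cons t θ : Fin (n+1) → ℝ) ∈ ordSet (n+1) x y ↔ (t ∈ Set.Icc x y ∧ θ ∈ ordSet n t y) := by
  simp only [ordSet, Set.mem_setOf_eq, Set.mem_Icc]
  rw [cons_mono_iff]
  constructor
  · rintro ⟨⟨hmono, ht⟩, hx, hy⟩
    refine ⟨⟨by simpa using hx 0, by simpa using hy 0⟩, hmono, ht, fun i => by simpa using hy i.succ⟩
  · rintro ⟨⟨hxt, hty⟩, hmono, ht, hy⟩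
    refine ⟨⟨hmono, ht⟩, ?_, ?_⟩
    · intro i
      induction i using Fin.cases with
      | zero => simpa using hxt
      | succ i => simpa using le_trans hxt (ht i)
    · intro i
      induction i using Fin.cases with
      | zero => simpa using hty
      | succ i => simpa using hy i
end

noncomputable section

lemma ord_integral : ∀ (n : ℕ) (g : Fin n → ℝ → ℂ), (∀ i, Continuous (g i)) →
    ∀ x y : ℝ, x ≤ y →
    (∫ θ in ordSet n x y, ∏ i, g i (θ i)) = iterF n g x y := by
  intro n
  induction n with
  | zero =>
    intro g _ x y _
    have huniv : ordSet 0 x y = Set.univ := by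
      ext θ; simp [ordSet]
    rw [huniv]
    simp only [Finset.univ_eq_empty, Finset.prod_empty, iterF]
    rw [MeasureTheory.setIntegral_const]
    simp [volume_pi, Measure.real]
  | succ n ih =>
    intro g hg x y hxy
    set F : (Fin (n+1) → ℝ) → ℂ := Set.indicator (ordSet (n+1) x y) (fun θ => ∏ i, g i (θ i))
      with hFdef
    have hIntOn : IntegrableOn (fun θ : Fin (n+1) → ℝ => ∏ i, g i (θ i)) (ordSet (n+1) x y) := by
      apply ContinuousOn.integrableOn_compact (isCompact_ordSet (n+1) x y)
      apply Continuous.continuousOn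
      exact continuous_finset_prod _ fun i _ => (hg i).comp (continuous_apply i)
    have hInt : Integrable F := hIntOn.integrable_indicator (measurableSet_ordSet (n+1) x y)
    have h1 : (∫ θ in ordSet (n+1) x y, ∏ i, g i (θ i)) = ∫ θ, F θ :=
      (integral_indicator (measurableSet_ordSet (n+1) x y)).symm
    rw [h1]
    have mp := (measurePreserving_piFinSuccAbove (fun _ : Fin (n+1) => (volume : Measure ℝ)) 0).symm
    have hemb := (MeasurableEquiv.piFinSuccAbove (fun _ : Fin (n+1) => ℝ) 0).symm.measurableEmbedding
    have h2 : (∫ θ, F θ) = ∫ p : ℝ × (Fin n → ℝ),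
        F ((MeasurableEquiv.piFinSuccAbove (fun _ : Fin (n+1) => ℝ) 0).symm p) := by
      rw [volume_pi, ← mp.integral_comp hemb]
      rfl
    rw [h2]
    have hInt2 : Integrable (fun p : ℝ × (Fin n → ℝ) =>
        F ((MeasurableEquiv.piFinSuccAbove (fun _ : Fin (n+1) => ℝ) 0).symm p)) := by
      have := (mp.integrable_comp_emb hemb (g := F)).2 (by rw [← volume_pi]; exact hInt)
      exact this
    rw [show (volume : Measure (ℝ × (Fin n → ℝ))) = (volume : Measure ℝ).prod volume from rfl]
    rw [MeasureTheory.integral_prod _ (by exact hInt2)]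
    -- rewrite the inner/outer structure
    have hcons : ∀ (t : ℝ) (θ' : Fin n → ℝ),
        F ((MeasurableEquiv.piFinSuccAbove (fun _ : Fin (n+1) => ℝ) 0).symm (t, θ'))
        = F (Fin.cons t θ') := by
      intro t θ'
      congr 1
      simp [MeasurableEquiv.piFinSuccAbove_symm_apply, Fin.insertNthEquiv, Fin.insertNth_zero]
    have hind : ∀ (t : ℝ) (θ' : Fin n → ℝ), F (Fin.cons t θ') =
        Set.indicator (Set.Icc x y)
          (fun s => g 0 s *
            Set.indicator (ordSet n s y) (fun ψ => ∏ i : Fin n, g i.succ (ψ i)) θ') t := by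
      intro t θ'
      by_cases h1 : t ∈ Set.Icc x y
      · by_cases h2 : θ' ∈ ordSet n t y
        · rw [hFdef]
          rw [Set.indicator_of_mem ((cons_mem_ordSet_iff t θ' x y).2 ⟨h1, h2⟩)]
          rw [Set.indicator_of_mem h1, Set.indicator_of_mem h2]
          rw [Fin.prod_univ_succ]
          simp
        · rw [hFdef]
          rw [Set.indicator_of_notMem (fun hmem => h2 ((cons_mem_ordSet_iff t θ' x y).1 hmem).2)]
          rw [Set.indicator_of_mem h1, Set.indicator_of_notMem h2, mul_zero]
      · rw [hFdef]
        rw [Set.indicator_of_notMem (fun hmem => h1 ((cons_mem_ordSet_iff t θ' x y).1 hmem).1)]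
        rw [Set.indicator_of_notMem h1]
    have houter : ∀ t : ℝ, (∫ θ' : Fin n → ℝ,
        F ((MeasurableEquiv.piFinSuccAbove (fun _ : Fin (n+1) => ℝ) 0).symm (t, θ')))
        = Set.indicator (Set.Icc x y)
            (fun s => g 0 s * iterF n (fun i => g i.succ) s y) t := by
      intro t
      by_cases h1 : t ∈ Set.Icc x y
      · rw [Set.indicator_of_mem h1]
        calc (∫ θ' : Fin n → ℝ,
              F ((MeasurableEquiv.piFinSuccAbove (fun _ : Fin (n+1) => ℝ) 0).symm (t, θ')))
            = ∫ θ' : Fin n → ℝ, g 0 t *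
                Set.indicator (ordSet n t y) (fun ψ => ∏ i : Fin n, g i.succ (ψ i)) θ' := by
              refine integral_congr_ae (Filter.Eventually.of_forall fun θ' => ?_)
              show F _ = _
              rw [hcons, hind]
              rw [Set.indicator_of_mem h1]
          _ = g 0 t * ∫ θ' : Fin n → ℝ,
                Set.indicator (ordSet n t y) (fun ψ => ∏ i : Fin n, g i.succ (ψ i)) θ' :=
              integral_const_mul _ _
          _ = g 0 t * iterF n (fun i => g i.succ) t y := by
              rw [integral_indicator (measurableSet_ordSet n t y)]
              rw [ih (fun i => g i.succ) (fun i => hg i.succ) t y h1.2]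
      · rw [Set.indicator_of_notMem h1]
        have : ∀ θ' : Fin n → ℝ,
            F ((MeasurableEquiv.piFinSuccAbove (fun _ : Fin (n+1) => ℝ) 0).symm (t, θ')) = 0 := by
          intro θ'
          rw [hcons, hind, Set.indicator_of_notMem h1]
        simp only [this, integral_zero]
    rw [integral_congr_ae (Filter.Eventually.of_forall houter)]
    rw [integral_indicator measurableSet_Icc]
    rw [MeasureTheory.integral_Icc_eq_integral_Ioc]
    have : iterF (n+1) g x y = ∫ t in x..y, g 0 t * iterF n (fun i => g i.succ) t y := rfl
    rw [this, intervalIntegral.integral_of_le hxy]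
end

noncomputable section

def Sset (m : ℕ) : Set (Fin (m+1) → ℝ) :=
  {θ | 0 ≤ θ 0 ∧ θ 0 < 2 * π ∧ (∀ i j : Fin (m+1), i ≤ j → θ i ≤ θ j) ∧
    θ (Fin.last m) ≤ θ 0 + 2 * π}

lemma cons_mem_Sset_iff (m : ℕ) (t : ℝ) (θ' : Fin m → ℝ) :
    (Fin.cons t θ' : Fin (m+1) → ℝ) ∈ Sset m ↔
      (t ∈ Set.Ico 0 (2 * π) ∧ θ' ∈ ordSet m t (t + 2 * π)) := by
  simp only [Sset, Set.mem_setOf_eq, Fin.cons_zero, Set.mem_Ico, ordSet]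
  constructor
  · rintro ⟨h0, h2, hmono, hlast⟩
    obtain ⟨hmono', ht⟩ := (cons_mono_iff t θ').1 hmono
    refine ⟨⟨h0, h2⟩, hmono', ht, fun i => ?_⟩
    have h := hmono i.succ (Fin.last m) (Fin.le_last _)
    rw [Fin.cons_succ] at h
    exact le_trans h hlast
  · rintro ⟨⟨h0, h2⟩, hmono', ht, hy⟩
    have hmono := (cons_mono_iff t θ').2 ⟨hmono', ht⟩
    have hall : ∀ i : Fin (m+1), (Fin.cons t θ' : Fin (m+1) → ℝ) i ≤ t + 2 * π := by
      intro i
      induction i using Fin.cases with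
      | zero => rw [Fin.cons_zero]; have := Real.pi_pos; linarith
      | succ i => rw [Fin.cons_succ]; exact hy i
    exact ⟨h0, h2, hmono, hall _⟩

lemma measurableSet_Sset (m : ℕ) : MeasurableSet (Sset m) := by
  have h1 : MeasurableSet {θ : Fin (m+1) → ℝ | 0 ≤ θ 0} :=
    measurableSet_le measurable_const (measurable_pi_apply 0)
  have h2 : MeasurableSet {θ : Fin (m+1) → ℝ | θ 0 < 2 * π} :=
    measurableSet_lt (measurable_pi_apply 0) measurable_const
  have h3 : MeasurableSet {θ : Fin (m+1) → ℝ | ∀ i j : Fin (m+1), i ≤ j → θ i ≤ θ j} := by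
    simp only [Set.setOf_forall]
    exact MeasurableSet.iInter fun i => MeasurableSet.iInter fun j => MeasurableSet.iInter
      fun _ => measurableSet_le (measurable_pi_apply i) (measurable_pi_apply j)
  have h4 : MeasurableSet {θ : Fin (m+1) → ℝ | θ (Fin.last m) ≤ θ 0 + 2 * π} :=
    measurableSet_le (measurable_pi_apply _) ((measurable_pi_apply 0).add_const _)
  have : Sset m = {θ : Fin (m+1) → ℝ | 0 ≤ θ 0} ∩ ({θ | θ 0 < 2 * π} ∩
      ({θ | ∀ i j : Fin (m+1), i ≤ j → θ i ≤ θ j} ∩ {θ | θ (Fin.last m) ≤ θ 0 + 2 * π})) := by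
    ext θ; simp [Sset, Set.mem_setOf_eq, and_assoc]
  rw [this]
  exact h1.inter (h2.inter (h3.inter h4))

lemma Sset_subset (m : ℕ) : Sset m ⊆ Set.pi Set.univ (fun _ : Fin (m+1) => Set.Icc 0 (2*π + 2*π)) := by
  rintro θ ⟨h0, h2, hmono, hlast⟩ i _
  constructor
  · exact le_trans h0 (hmono 0 i (Fin.zero_le _))
  · have := hmono i (Fin.last m) (Fin.le_last _)
    have := le_trans this hlast
    linarith

lemma Sset_integral (m : ℕ) (g : Fin (m+1) → ℝ → ℂ) (hg : ∀ i, Continuous (g i)) :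
    (∫ θ in Sset m, ∏ i, g i (θ i)) =
      ∫ t in (0:ℝ)..(2 * π), g 0 t * iterF m (fun i => g i.succ) t (t + 2 * π) := by
  set F : (Fin (m+1) → ℝ) → ℂ := Set.indicator (Sset m) (fun θ => ∏ i, g i (θ i)) with hFdef
  have hcontprod : Continuous (fun θ : Fin (m+1) → ℝ => ∏ i, g i (θ i)) :=
    continuous_finset_prod _ fun i _ => (hg i).comp (continuous_apply i)
  have hIntOn : IntegrableOn (fun θ : Fin (m+1) → ℝ => ∏ i, g i (θ i)) (Sset m) := by
    apply MeasureTheory.IntegrableOn.mono_set _ (Sset_subset m)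
    apply ContinuousOn.integrableOn_compact (isCompact_univ_pi fun _ => isCompact_Icc)
    exact hcontprod.continuousOn
  have hInt : Integrable F := hIntOn.integrable_indicator (measurableSet_Sset m)
  have h1 : (∫ θ in Sset m, ∏ i, g i (θ i)) = ∫ θ, F θ :=
    (integral_indicator (measurableSet_Sset m)).symm
  rw [h1]
  have mp := (measurePreserving_piFinSuccAbove (fun _ : Fin (m+1) => (volume : Measure ℝ)) 0).symm
  have hemb := (MeasurableEquiv.piFinSuccAbove (fun _ : Fin (m+1) => ℝ) 0).symm.measurableEmbedding
  have h2 : (∫ θ, F θ) = ∫ p : ℝ × (Fin m → ℝ),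
      F ((MeasurableEquiv.piFinSuccAbove (fun _ : Fin (m+1) => ℝ) 0).symm p) := by
    rw [volume_pi, ← mp.integral_comp hemb]
    rfl
  rw [h2]
  have hInt2 : Integrable (fun p : ℝ × (Fin m → ℝ) =>
      F ((MeasurableEquiv.piFinSuccAbove (fun _ : Fin (m+1) => ℝ) 0).symm p)) := by
    have := (mp.integrable_comp_emb hemb (g := F)).2 (by rw [← volume_pi]; exact hInt)
    exact this
  rw [show (volume : Measure (ℝ × (Fin m → ℝ))) = (volume : Measure ℝ).prod volume from rfl]
  rw [MeasureTheory.integral_prod _ (by exact hInt2)]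
  have hcons : ∀ (t : ℝ) (θ' : Fin m → ℝ),
      F ((MeasurableEquiv.piFinSuccAbove (fun _ : Fin (m+1) => ℝ) 0).symm (t, θ'))
      = F (Fin.cons t θ') := by
    intro t θ'
    congr 1
    simp [MeasurableEquiv.piFinSuccAbove_symm_apply, Fin.insertNthEquiv, Fin.insertNth_zero]
  have hind : ∀ (t : ℝ) (θ' : Fin m → ℝ), F (Fin.cons t θ') =
      Set.indicator (Set.Ico 0 (2 * π))
        (fun s => g 0 s *
          Set.indicator (ordSet m s (s + 2 * π)) (fun ψ => ∏ i : Fin m, g i.succ (ψ i)) θ') t := by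
    intro t θ'
    by_cases h1 : t ∈ Set.Ico 0 (2 * π)
    · by_cases h2 : θ' ∈ ordSet m t (t + 2 * π)
      · rw [hFdef]
        rw [Set.indicator_of_mem ((cons_mem_Sset_iff m t θ').2 ⟨h1, h2⟩)]
        rw [Set.indicator_of_mem h1, Set.indicator_of_mem h2]
        rw [Fin.prod_univ_succ]
        simp
      · rw [hFdef]
        rw [Set.indicator_of_notMem (fun hmem => h2 ((cons_mem_Sset_iff m t θ').1 hmem).2)]
        rw [Set.indicator_of_mem h1, Set.indicator_of_notMem h2, mul_zero]
    · rw [hFdef]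
      rw [Set.indicator_of_notMem (fun hmem => h1 ((cons_mem_Sset_iff m t θ').1 hmem).1)]
      rw [Set.indicator_of_notMem h1]
  have houter : ∀ t : ℝ, (∫ θ' : Fin m → ℝ,
      F ((MeasurableEquiv.piFinSuccAbove (fun _ : Fin (m+1) => ℝ) 0).symm (t, θ')))
      = Set.indicator (Set.Ico 0 (2 * π))
          (fun s => g 0 s * iterF m (fun i => g i.succ) s (s + 2 * π)) t := by
    intro t
    by_cases h1 : t ∈ Set.Ico 0 (2 * π)
    · rw [Set.indicator_of_mem h1]
      calc (∫ θ' : Fin m → ℝ,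
            F ((MeasurableEquiv.piFinSuccAbove (fun _ : Fin (m+1) => ℝ) 0).symm (t, θ')))
          = ∫ θ' : Fin m → ℝ, g 0 t *
              Set.indicator (ordSet m t (t + 2 * π)) (fun ψ => ∏ i : Fin m, g i.succ (ψ i)) θ' := by
            refine integral_congr_ae (Filter.Eventually.of_forall fun θ' => ?_)
            show F _ = _
            rw [hcons, hind]
            rw [Set.indicator_of_mem h1]
        _ = g 0 t * ∫ θ' : Fin m → ℝ,
              Set.indicator (ordSet m t (t + 2 * π)) (fun ψ => ∏ i : Fin m, g i.succ (ψ i)) θ' :=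
            integral_const_mul _ _
        _ = g 0 t * iterF m (fun i => g i.succ) t (t + 2 * π) := by
            rw [integral_indicator (measurableSet_ordSet m t (t + 2 * π))]
            rw [ord_integral m (fun i => g i.succ) (fun i => hg i.succ) t (t + 2 * π)
              (by have := Real.pi_pos; linarith)]
    · rw [Set.indicator_of_notMem h1]
      have : ∀ θ' : Fin m → ℝ,
          F ((MeasurableEquiv.piFinSuccAbove (fun _ : Fin (m+1) => ℝ) 0).symm (t, θ')) = 0 := by
        intro θ'
        rw [hcons, hind, Set.indicator_of_notMem h1]
      simp only [this, integral_zero]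
  rw [integral_congr_ae (Filter.Eventually.of_forall houter)]
  rw [integral_indicator measurableSet_Ico]
  rw [MeasureTheory.integral_Ico_eq_integral_Ioo,
    intervalIntegral.integral_of_le (by have := Real.pi_pos; linarith : (0:ℝ) ≤ 2*π),
    MeasureTheory.integral_Ioc_eq_integral_Ioo]
end

/-- For the circle of radius `r` centered at the origin, traversed counterclockwise, and points
`z₁, ..., zₙ` all outside the circle (`|z_k| > r`), the cyclic iterated integral
`χ(zₙ,...,z₁) = (1/(2πi)ⁿ) ∫_{cyclically ordered n-tuples on the circle}
  dwₙ/(zₙ − wₙ) ⋯ dw₁/(z₁ − w₁)`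
equals `0`.  Here `w_k = r e^{iθ_k}`, `dw_k = i r e^{iθ_k} dθ_k`, and the domain is
`θ₁ ∈ [0,2π)`, `θ₁ ≤ θ₂ ≤ ⋯ ≤ θₙ ≤ θ₁ + 2π`. -/
theorem cyclic_iterated_integral_circle_outside (n : ℕ) (hn : 0 < n) (r : ℝ) (hr : 0 < r)
    (z : Fin n → ℂ) (hz : ∀ k, r < ‖z k‖) :
    (1 / (2 * (π : ℂ) * Complex.I)) ^ n *
      ∫ θ in {θ : Fin n → ℝ |
          0 ≤ θ ⟨0, hn⟩ ∧ θ ⟨0, hn⟩ < 2 * π ∧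
          (∀ i j : Fin n, i ≤ j → θ i ≤ θ j) ∧
          θ ⟨n - 1, Nat.sub_lt hn Nat.one_pos⟩ ≤ θ ⟨0, hn⟩ + 2 * π},
        ∏ k : Fin n,
          (Complex.I * r * Complex.exp (Complex.I * (θ k : ℂ))) /
            (z k - r * Complex.exp (Complex.I * (θ k : ℂ)))
      = 0 := by
  obtain ⟨m, rfl⟩ : ∃ m, n = m + 1 := ⟨n - 1, (Nat.succ_pred_eq_of_pos hn).symm⟩
  set g : Fin (m+1) → ℝ → ℂ := fun k t =>
    (Complex.I * r * Complex.exp (Complex.I * (t:ℂ))) /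
      (z k - r * Complex.exp (Complex.I * (t:ℂ))) with hgdef
  have hpos : ∀ k, IsPos0 (g k) := fun k => isPos0_basic hr (hz k)
  have hset : {θ : Fin (m+1) → ℝ |
      0 ≤ θ ⟨0, hn⟩ ∧ θ ⟨0, hn⟩ < 2 * π ∧
      (∀ i j : Fin (m+1), i ≤ j → θ i ≤ θ j) ∧
      θ ⟨m + 1 - 1, Nat.sub_lt hn Nat.one_pos⟩ ≤ θ ⟨0, hn⟩ + 2 * π} = Sset m := rfl
  have hmain : (∫ θ in {θ : Fin (m+1) → ℝ |
      0 ≤ θ ⟨0, hn⟩ ∧ θ ⟨0, hn⟩ < 2 * π ∧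
      (∀ i j : Fin (m+1), i ≤ j → θ i ≤ θ j) ∧
      θ ⟨m + 1 - 1, Nat.sub_lt hn Nat.one_pos⟩ ≤ θ ⟨0, hn⟩ + 2 * π},
      ∏ k : Fin (m+1),
        (Complex.I * r * Complex.exp (Complex.I * (θ k : ℂ))) /
          (z k - r * Complex.exp (Complex.I * (θ k : ℂ)))) = 0 := by
    rw [hset]
    have heq : (∫ θ in Sset m, ∏ k : Fin (m+1),
        (Complex.I * r * Complex.exp (Complex.I * (θ k : ℂ))) /
          (z k - r * Complex.exp (Complex.I * (θ k : ℂ))))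
        = ∫ θ in Sset m, ∏ i, g i (θ i) := rfl
    rw [heq, Sset_integral m g (fun i => (hpos i).isPos.continuous)]
    exact cyclic_zero m g hpos
  rw [hmain, mul_zero]
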